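/- arXiv:2603.01093 — 2 statements merged into one kernel-verified Lean document; each statement's English description precedes it below -/
import Mathlib

section
/- Let V be a real vector space equipped with two seminorms ‖·‖₀ and ‖·‖₁, let Y and Z be real normed spaces, let 𝒢 : V → Y and ℬ : V → Z be linear maps, and let C_L, C_U > 0 be constants such that C_L ‖φ‖₀² ≤ ‖𝒢φ‖_Y² + ‖ℬφ‖_Z² ≤ C_U ‖φ‖₁² for all φ ∈ V. Let φ* ∈ V, set g := ℬφ*, and assume 𝒢φ* = 0. Define the loss ℒ(φ) := ‖𝒢φ‖_Y² + ‖ℬφ − g‖_Z². Then for any φ_ρ, φ_a ∈ V, any function ℒ̃ : V → ℝ, and any ε ≥ 0 with |ℒ(φ) − ℒ̃(φ)| ≤ ε for φ ∈ {φ_ρ, φ_a}, one has C_L ‖φ* − φ_ρ‖₀² ≤ C_U ‖φ* − φ_a‖₁² + 2ε + (ℒ̃(φ_ρ) − ℒ̃(φ_a)). -/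
/-- Abstract error decomposition for the randomized neural network approximation under a
graph-norm equivalence: if `C_L ‖φ‖₀² ≤ ‖𝒢φ‖² + ‖ℬφ‖² ≤ C_U ‖φ‖₁²` for all `φ`, the
exact solution `φ*` satisfies `𝒢φ* = 0` with boundary data `g = ℬφ*`, and the empirical
loss `ℒ̃` deviates from the exact loss `ℒ(φ) = ‖𝒢φ‖² + ‖ℬφ − g‖²` by at most `ε` at
`φ_ρ` and `φ_a`, then
`C_L ‖φ* − φ_ρ‖₀² ≤ C_U ‖φ* − φ_a‖₁² + 2ε + (ℒ̃(φ_ρ) − ℒ̃(φ_a))`. -/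
theorem statement_6 {V Y Z : Type*} [AddCommGroup V] [Module ℝ V]
    [NormedAddCommGroup Y] [NormedSpace ℝ Y] [NormedAddCommGroup Z] [NormedSpace ℝ Z]
    (n₀ n₁ : Seminorm ℝ V)
    (G : V →ₗ[ℝ] Y) (B : V →ₗ[ℝ] Z)
    (CL CU : ℝ) (hCL : 0 < CL) (hCU : 0 < CU)
    (hgraph : ∀ φ : V,
      CL * (n₀ φ) ^ 2 ≤ ‖G φ‖ ^ 2 + ‖B φ‖ ^ 2 ∧ ‖G φ‖ ^ 2 + ‖B φ‖ ^ 2 ≤ CU * (n₁ φ) ^ 2)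
    (φs : V) (hGφs : G φs = 0)
    (φρ φa : V) (Lt : V → ℝ) (ε : ℝ) (hε : 0 ≤ ε)
    (hρ : |(‖G φρ‖ ^ 2 + ‖B φρ - B φs‖ ^ 2) - Lt φρ| ≤ ε)
    (ha : |(‖G φa‖ ^ 2 + ‖B φa - B φs‖ ^ 2) - Lt φa| ≤ ε) :
    CL * (n₀ (φs - φρ)) ^ 2 ≤ CU * (n₁ (φs - φa)) ^ 2 + 2 * ε + (Lt φρ - Lt φa) := by
  have h1 := (hgraph (φs - φρ)).1
  have h2 := (hgraph (φa - φs)).2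
  have e1 : ‖G (φs - φρ)‖ = ‖G φρ‖ := by
    rw [map_sub, hGφs, zero_sub, norm_neg]
  have e2 : ‖B (φs - φρ)‖ = ‖B φρ - B φs‖ := by
    rw [map_sub, ← norm_neg, neg_sub]
  have e3 : ‖G (φa - φs)‖ = ‖G φa‖ := by rw [map_sub, hGφs, sub_zero]
  have e4 : ‖B (φa - φs)‖ = ‖B φa - B φs‖ := by rw [map_sub]
  have e5 : n₁ (φa - φs) = n₁ (φs - φa) := by
    rw [← map_neg_eq_map, neg_sub]
  rw [e1, e2] at h1
  rw [e3, e4, e5] at h2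
  have hρ' := abs_le.mp hρ
  have ha' := abs_le.mp ha
  linarith
end

section
/- Let F : ℝ → ℝ^d be continuous, q : ℝ^d × ℝ → ℝ, u₀ : ℝ^d → ℝ, and T > 0. Let u : ℝ × ℝ^d → ℝ be differentiable on an open set U containing [0,T] × ℝ^d (or containing the curve below), satisfy ∂_t u + F(u) · ∇_x u + q(x,u) = 0 on U, and u(0,·) = u₀. Let φ : ℝ × ℝ^d × ℝ → ℝ be differentiable and satisfy the level-set transport equation ∂_t φ(t,x,z) + F(z) · ∇_x φ(t,x,z) − q(x,z) ∂_z φ(t,x,z) = 0 everywhere, with initial data φ(0,x,z) = z − u₀(x). Let x : [0,T] → ℝ^d be differentiable with x'(t) = F(u(t, x(t))). Then φ(t, x(t), u(t, x(t))) = 0 for all t ∈ [0,T]. -/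
open MeasureTheory Set RealInnerProductSpace

/-- The graph `z = u(t,x)` of a classical solution of the quasilinear balance law
`∂_t u + F(u) · ∇_x u + q(x,u) = 0`, `u(0,·) = u₀`, stays inside the zero level set of
any differentiable solution `φ(t,x,z)` of the level-set transport equation
`∂_t φ + F(z) · ∇_x φ − q(x,z) ∂_z φ = 0` with initial data `φ(0,x,z) = z − u₀(x)`,
along any spatial characteristic `x'(t) = F(u(t,x(t)))`. -/
theorem statement_8 {d : ℕ}
    (F : ℝ → EuclideanSpace ℝ (Fin d)) (hF : Continuous F)
    (q : EuclideanSpace ℝ (Fin d) × ℝ → ℝ)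
    (u₀ : EuclideanSpace ℝ (Fin d) → ℝ)
    (T : ℝ) (hT : 0 < T)
    (U : Set (ℝ × EuclideanSpace ℝ (Fin d))) (hU : IsOpen U)
    (u : ℝ × EuclideanSpace ℝ (Fin d) → ℝ) (hu : DifferentiableOn ℝ u U)
    (hpde : ∀ X ∈ U,
      deriv (fun t => u (t, X.2)) X.1 +
        ⟪F (u X), gradient (fun y => u (X.1, y)) X.2⟫ + q (X.2, u X) = 0)
    (hinit : ∀ y : EuclideanSpace ℝ (Fin d), u (0, y) = u₀ y)
    (φ : ℝ × EuclideanSpace ℝ (Fin d) × ℝ → ℝ) (hφ : Differentiable ℝ φ)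
    (hls : ∀ (t : ℝ) (y : EuclideanSpace ℝ (Fin d)) (z : ℝ),
      deriv (fun t' => φ (t', y, z)) t +
          ⟪F z, gradient (fun y' => φ (t, y', z)) y⟫ -
        q (y, z) * deriv (fun z' => φ (t, y, z')) z = 0)
    (hφ0 : ∀ (y : EuclideanSpace ℝ (Fin d)) (z : ℝ), φ (0, y, z) = z - u₀ y)
    (x : ℝ → EuclideanSpace ℝ (Fin d))
    (hmem : ∀ t ∈ Set.Icc (0 : ℝ) T, (t, x t) ∈ U)
    (hode : ∀ t ∈ Set.Icc (0 : ℝ) T, HasDerivAt x (F (u (t, x t))) t) :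
    ∀ t ∈ Set.Icc (0 : ℝ) T, φ (t, x t, u (t, x t)) = 0 := by

  -- fderiv form of the PDEuclideanSpace ℝ (Fin d) for u
  have hpdeL : ∀ p ∈ U, fderiv ℝ u p (1, F (u p)) = -q (p.2, u p) := by
    intro p hp
    have hdu : DifferentiableAt ℝ u p := hu.differentiableAt (hU.mem_nhds hp)
    have h1 : HasDerivAt (fun t => u (t, p.2)) (fderiv ℝ u p (1, 0)) p.1 := by
      have := hdu.hasFDerivAt.comp_hasDerivAt p.1
        ((hasDerivAt_id p.1).prodMk (hasDerivAt_const p.1 p.2))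
      simpa [Function.comp_def] using this
    have h2 : HasFDerivAt (fun y => u (p.1, y))
        ((fderiv ℝ u p).comp (ContinuousLinearMap.inr ℝ ℝ (EuclideanSpace ℝ (Fin d)))) p.2 :=
      hdu.hasFDerivAt.comp p.2 (hasFDerivAt_prodMk_right p.1 p.2)
    have hg : ⟪F (u p), gradient (fun y => u (p.1, y)) p.2⟫ = fderiv ℝ u p (0, F (u p)) := by
      rw [real_inner_comm, gradient, InnerProductSpace.toDual_symm_apply, h2.fderiv]
      rfl
    have hsum : fderiv ℝ u p (1, F (u p)) = fderiv ℝ u p (1, 0) + fderiv ℝ u p (0, F (u p)) := by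
      rw [← map_add]
      norm_num [Prod.ext_iff]
    have hp0 := hpde p hp
    rw [h1.deriv, hg] at hp0
    rw [hsum]; linarith
  -- fderiv form of the level-set equation
  have hlsL : ∀ (t : ℝ) (y : EuclideanSpace ℝ (Fin d)) (z : ℝ),
      fderiv ℝ φ (t, y, z) (1, F z, -q (y, z)) = 0 := by
    intro t y z
    have hdφ := (hφ (t, y, z)).hasFDerivAt
    have h1 : HasDerivAt (fun t' => φ (t', y, z))
        (fderiv ℝ φ (t, y, z) (1, 0, 0)) t := by
      have := hdφ.comp_hasDerivAt t
        ((hasDerivAt_id t).prodMk ((hasDerivAt_const t y).prodMk (hasDerivAt_const t z)))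
      simpa [Function.comp_def] using this
    have h2 : HasFDerivAt (fun y' => φ (t, y', z))
        ((fderiv ℝ φ (t, y, z)).comp
          ((0 : EuclideanSpace ℝ (Fin d) →L[ℝ] ℝ).prod ((ContinuousLinearMap.id ℝ (EuclideanSpace ℝ (Fin d))).prod (0 : EuclideanSpace ℝ (Fin d) →L[ℝ] ℝ)))) y := by
      exact hdφ.comp y ((hasFDerivAt_const t y).prodMk
        ((hasFDerivAt_id y).prodMk (hasFDerivAt_const z y)))
    have hg : ⟪F z, gradient (fun y' => φ (t, y', z)) y⟫
        = fderiv ℝ φ (t, y, z) (0, F z, 0) := by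
      rw [real_inner_comm, gradient, InnerProductSpace.toDual_symm_apply, h2.fderiv]
      rfl
    have h3 : HasDerivAt (fun z' => φ (t, y, z'))
        (fderiv ℝ φ (t, y, z) (0, 0, 1)) z := by
      have := hdφ.comp_hasDerivAt z
        ((hasDerivAt_const z t).prodMk ((hasDerivAt_const z y).prodMk (hasDerivAt_id z)))
      simpa [Function.comp_def] using this
    have hsum : fderiv ℝ φ (t, y, z) (1, F z, -q (y, z))
        = fderiv ℝ φ (t, y, z) (1, 0, 0) + fderiv ℝ φ (t, y, z) (0, F z, 0)
          + (-q (y, z)) • fderiv ℝ φ (t, y, z) (0, 0, 1) := by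
      rw [← ContinuousLinearMap.map_smul, ← map_add, ← map_add]
      norm_num [Prod.ext_iff]
    have h0 := hls t y z
    rw [h1.deriv, hg, h3.deriv] at h0
    rw [hsum, smul_eq_mul]; linarith
  -- derivative of g t = φ (t, x t, u (t, x t)) is zero on [0,T]
  have hg0 : ∀ t ∈ Set.Icc (0 : ℝ) T,
      HasDerivAt (fun s => φ (s, x s, u (s, x s))) 0 t := by
    intro t ht
    have hx := hode t ht
    have hγ : HasDerivAt (fun s => (s, x s)) (1, F (u (t, x t))) t :=
      (hasDerivAt_id t).prodMk hx
    have hdu : DifferentiableAt ℝ u (t, x t) :=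
      hu.differentiableAt (hU.mem_nhds (hmem t ht))
    have hut : HasDerivAt (fun s => u (s, x s)) (-q (x t, u (t, x t))) t := by
      have := hdu.hasFDerivAt.comp_hasDerivAt t hγ
      rw [hpdeL (t, x t) (hmem t ht)] at this
      simpa [Function.comp_def] using this
    have hΓ : HasDerivAt (fun s => (s, x s, u (s, x s)))
        ((1 : ℝ), F (u (t, x t)), -q (x t, u (t, x t))) t :=
      (hasDerivAt_id t).prodMk (hx.prodMk hut)
    have := (hφ (t, x t, u (t, x t))).hasFDerivAt.comp_hasDerivAt t hΓ
    rw [hlsL t (x t) (u (t, x t))] at this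
    simpa [Function.comp_def] using this
  have hcont : ContinuousOn (fun s => φ (s, x s, u (s, x s))) (Set.Icc 0 T) :=
    fun t ht => (hg0 t ht).continuousAt.continuousWithinAt
  have hconst := constant_of_has_deriv_right_zero hcont
    (fun t ht => (hg0 t (Set.Ico_subset_Icc_self ht)).hasDerivWithinAt)
  intro t ht
  have := hconst t ht
  rw [this, hφ0, hinit]
  ring
end
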